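/- Suppose c ≤ πL with L a positive integer. Then for every x ∈ ℝ³, the sum over lattice points outside the unit ball satisfies Σ_{k∈ℤ³, k/L∉R} |h_c(x − k/L)|² ≤ (4π/3) c³ L³. -/

import Mathlib

open MeasureTheory Real RealInnerProductSpace

noncomputable section

/-- ℝ³ as a Euclidean space. -/
abbrev E3 := EuclideanSpace ℝ (Fin 3)

/-- The closed unit ball in ℝ³. -/
def ballR : Set E3 := Metric.closedBall 0 1

/-- The three-dimensional besinc function: the inverse Fourier transform of the
indicator of the ball of radius `c`, i.e. `(c/(2π))³ ∫_R e^{ic⟨x,y⟩} dy`. -/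
def besinc (c : ℝ) (x : E3) : ℂ :=
  (c / (2 * π)) ^ 3 * ∫ y in ballR, Complex.exp (Complex.I * (c * ⟪x, y⟫ : ℝ))

/-- Embed an integer lattice point `k ∈ ℤ³` into ℝ³. -/
def kv (k : Fin 3 → ℤ) : E3 := (WithLp.equiv 2 (Fin 3 → ℝ)).symm (fun i => (k i : ℝ))

/-- `ξ_c(x)² = Σ_{k/L ∉ R} |h_c(x − k/L)|²`, the sum over lattice points outside the unit ball. -/
def xiSq (c : ℝ) (L : ℕ) (x : E3) : ℝ :=
  ∑' k : {k : Fin 3 → ℤ // (L : ℝ)⁻¹ • kv k ∉ ballR},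
    ‖besinc c (x - (L : ℝ)⁻¹ • kv k.1)‖ ^ 2


lemma oneDim (m : ℤ) :
    ∫ t in Set.Icc (-π) π, Complex.exp (Complex.I * m * t) =
      if m = 0 then ((2 * π : ℝ) : ℂ) else 0 := by
  rw [integral_Icc_eq_integral_Ioc, ← intervalIntegral.integral_of_le (by linarith [pi_pos] : -π ≤ π)]
  rcases eq_or_ne m 0 with rfl | hm
  · simp
    ring_nf
  · rw [if_neg hm]
    have hc : (Complex.I * m : ℂ) ≠ 0 := by
      simp [Complex.ext_iff]
      exact_mod_cast hm
    have := integral_exp_mul_complex (a := -π) (b := π) hc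
    simp only [mul_assoc] at this ⊢
    rw [this]
    have key : Complex.exp (Complex.I * (m * π)) = Complex.exp (Complex.I * (m * (-π : ℝ))) := by
      have h2 : Complex.exp ((m : ℂ) * (2 * π * Complex.I)) = 1 := Complex.exp_int_mul_two_pi_mul_I m
      have : Complex.I * (m * π) = (m : ℂ) * (2 * π * Complex.I) + Complex.I * (m * ((-π : ℝ) : ℂ)) := by
        push_cast; ring
      rw [this, Complex.exp_add, h2, one_mul]
    rw [key]
    simp
def Q : Set E3 := {y | ∀ i, y i ∈ Set.Icc (-π) π}

open RealInnerProductSpace in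
lemma threeDim (m : Fin 3 → ℤ) :
    ∫ y in Q, Complex.exp (Complex.I * (⟪kv m, y⟫ : ℝ)) =
      if m = 0 then (((2 * π) ^ 3 : ℝ) : ℂ) else 0 := by
  have hinner : ∀ y : E3, (⟪kv m, y⟫ : ℝ) = ∑ i, (m i : ℝ) * y i := fun y => by
    simp [PiLp.inner_apply, RCLike.inner_apply, kv]
    exact Finset.sum_congr rfl fun i _ => mul_comm _ _
  -- rewrite integrand as product
  have hprod : ∀ y : E3, Complex.exp (Complex.I * (⟪kv m, y⟫ : ℝ)) =
      ∏ i, Complex.exp (Complex.I * (m i) * (y i : ℝ)) := by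
    intro y
    rw [hinner, ← Complex.exp_sum]
    congr 1
    push_cast
    rw [Finset.mul_sum]
    exact Finset.sum_congr rfl fun i _ => by ring
  simp_rw [hprod]
  -- set integral as indicator integral over E3
  have hQmeas : MeasurableSet Q := by
    have : Q = ⋂ i, (fun y : E3 => y i) ⁻¹' Set.Icc (-π) π := by
      ext y; simp [Q, Set.mem_iInter]
    rw [this]
    exact MeasurableSet.iInter fun i =>
      measurableSet_Icc.preimage (EuclideanSpace.proj i).continuous.measurable
  rw [← integral_indicator hQmeas]
  have hind : ∀ y : E3, Q.indicator (fun y => ∏ i, Complex.exp (Complex.I * (m i) * (y i : ℝ))) y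
      = ∏ i, (Set.Icc (-π) π).indicator (fun t : ℝ => Complex.exp (Complex.I * (m i) * (t : ℝ))) (y i) := by
    intro y
    by_cases hy : y ∈ Q
    · rw [Set.indicator_of_mem hy]
      exact Finset.prod_congr rfl fun i _ =>
        (Set.indicator_of_mem (hy i) (fun t : ℝ => Complex.exp (Complex.I * (m i) * t))).symm
    · rw [Set.indicator_of_notMem hy]
      obtain ⟨i, hi⟩ := not_forall.1 hy
      exact (Finset.prod_eq_zero (Finset.mem_univ i)
        (by rw [Set.indicator_of_notMem hi])).symm
  simp_rw [hind]
  -- transfer to pi space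
  have hmp := (EuclideanSpace.volume_preserving_symm_measurableEquiv_toLp (Fin 3)).symm
  rw [← hmp.integral_comp']
  have : ∀ y : Fin 3 → ℝ,
      (∏ i, (Set.Icc (-π) π).indicator (fun t : ℝ => Complex.exp (Complex.I * (m i) * t))
        (((MeasurableEquiv.toLp 2 (Fin 3 → ℝ)).symm.symm y) i))
      = ∏ i, (Set.Icc (-π) π).indicator (fun t : ℝ => Complex.exp (Complex.I * (m i) * t)) (y i) := by
    intro y; rfl
  simp_rw [this]
  rw [volume_pi, MeasureTheory.integral_fintype_prod_eq_prod (f := fun i (t : ℝ) =>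
    (Set.Icc (-π) π).indicator (fun t : ℝ => Complex.exp (Complex.I * (m i) * t)) t)]
  have : ∀ i : Fin 3, (∫ t : ℝ, (Set.Icc (-π) π).indicator
      (fun t : ℝ => Complex.exp (Complex.I * (m i) * t)) t)
      = if m i = 0 then ((2 * π : ℝ) : ℂ) else 0 := by
    intro i
    rw [integral_indicator measurableSet_Icc]
    exact oneDim (m i)
  simp_rw [this]
  rcases eq_or_ne m 0 with rfl | hm
  · simp
  · rw [if_neg hm]
    obtain ⟨i, hi⟩ := Function.ne_iff.1 hm
    simp only [Pi.zero_apply] at hi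
    exact Finset.prod_eq_zero (Finset.mem_univ i) (by simp [hi])

lemma hQmeas : MeasurableSet Q := by
  have : Q = ⋂ i, (fun y : E3 => y i) ⁻¹' Set.Icc (-π) π := by
    ext y; simp [Q, Set.mem_iInter]
  rw [this]
  exact MeasurableSet.iInter fun i =>
    measurableSet_Icc.preimage (EuclideanSpace.proj i).continuous.measurable

lemma Q_subset_ball : Q ⊆ Metric.closedBall (0 : E3) 7 := by
  intro y hy
  simp only [Metric.mem_closedBall, dist_zero_right]
  rw [EuclideanSpace.norm_eq]
  have hb : ∀ i : Fin 3, |y i| ≤ π := fun i => abs_le.2 ⟨(hy i).1, (hy i).2⟩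
  have : ∑ i, ‖y i‖ ^ 2 ≤ 3 * π ^ 2 := by
    have : ∀ i : Fin 3, ‖y i‖ ^ 2 ≤ π ^ 2 := fun i => by
      rw [Real.norm_eq_abs, ← sq_abs (π)]
      exact pow_le_pow_left₀ (abs_nonneg _) ((hb i).trans (le_abs_self π)) 2
    calc ∑ i, ‖y i‖ ^ 2 ≤ ∑ _i : Fin 3, π ^ 2 := Finset.sum_le_sum fun i _ => this i
    _ = 3 * π ^ 2 := by simp [Finset.sum_const]
  calc Real.sqrt (∑ i, ‖y i‖ ^ 2) ≤ Real.sqrt (3 * π ^ 2) := Real.sqrt_le_sqrt this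
  _ ≤ Real.sqrt (3 * 4 ^ 2) := by
      apply Real.sqrt_le_sqrt
      nlinarith [pi_le_four, pi_pos]
  _ ≤ 7 := by
      rw [show (3 : ℝ) * 4 ^ 2 = 48 by norm_num]
      rw [show (7 : ℝ) = Real.sqrt 49 by
        rw [show (49:ℝ) = 7^2 by norm_num, Real.sqrt_sq (by norm_num)]]
      exact Real.sqrt_le_sqrt (by norm_num)

abbrev μQ : Measure E3 := volume.restrict Q

instance : IsFiniteMeasure μQ := by
  constructor
  rw [Measure.restrict_apply_univ]
  exact lt_of_le_of_lt (measure_mono Q_subset_ball) (measure_closedBall_lt_top)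

open RealInnerProductSpace

def bC : ℝ := ((Real.sqrt (2 * π))⁻¹) ^ 3

lemma bC_pos : 0 < bC := by
  apply pow_pos
  rw [inv_pos]
  exact Real.sqrt_pos.2 (by positivity)

lemma bC_sq : bC ^ 2 * (2 * π) ^ 3 = 1 := by
  have h : (Real.sqrt (2 * π)) ^ 2 = 2 * π := Real.sq_sqrt (by positivity)
  have h2 : (0:ℝ) < 2 * π := by positivity
  have hne : ((2:ℝ) * π) ^ 3 ≠ 0 := by positivity
  have : bC ^ 2 = ((2 * π) ^ 3)⁻¹ := by
    rw [bC, ← pow_mul, ← inv_pow, show 3 * 2 = 2 * 3 from rfl, pow_mul, inv_pow, h]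
  rw [this, inv_mul_cancel₀ hne]

def fK (k : Fin 3 → ℤ) : E3 → ℂ := fun y => (bC : ℂ) * Complex.exp (Complex.I * (⟪kv k, y⟫ : ℝ))

lemma fK_cont (k : Fin 3 → ℤ) : Continuous (fK k) := by
  apply continuous_const.mul
  apply Complex.continuous_exp.comp
  apply continuous_const.mul
  exact Complex.continuous_ofReal.comp ((continuous_const.inner continuous_id))

lemma fK_memℒp (k : Fin 3 → ℤ) : MemLp (fK k) 2 μQ := by
  refine MemLp.mono_exponent (q := ⊤) ?_ le_top
  apply memLp_top_of_bound ((fK_cont k).aestronglyMeasurable) bC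
  filter_upwards with y
  simp only [fK, norm_mul, Complex.norm_real]
  simp [Complex.norm_exp, Real.norm_eq_abs, abs_of_pos bC_pos]

def eK (k : Fin 3 → ℤ) : Lp ℂ 2 μQ := (fK_memℒp k).toLp (fK k)

lemma inner_toLp {f g : E3 → ℂ} (hf : MemLp f 2 μQ) (hg : MemLp g 2 μQ) :
    (inner ℂ (hf.toLp f) (hg.toLp g) : ℂ) = ∫ y, (starRingEnd ℂ) (f y) * g y ∂μQ := by
  rw [MeasureTheory.L2.inner_def]
  apply integral_congr_ae
  filter_upwards [hf.coeFn_toLp, hg.coeFn_toLp] with y h1 h2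
  rw [h1, h2, RCLike.inner_apply, mul_comm]

lemma kv_sub (k l : Fin 3 → ℤ) : kv (l - k) = kv l - kv k := by
  ext i
  simp [kv]

lemma eK_orthonormal : Orthonormal ℂ eK := by
  rw [orthonormal_iff_ite]
  intro k l
  rw [eK, eK, inner_toLp]
  have : ∀ y : E3, (starRingEnd ℂ) (fK k y) * fK l y =
      (bC : ℂ)^2 * Complex.exp (Complex.I * (⟪kv (l - k), y⟫ : ℝ)) := by
    intro y
    simp only [fK, map_mul, ← Complex.exp_conj, map_mul, Complex.conj_I, Complex.conj_ofReal,
      Complex.ofReal_ratCast]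
    rw [kv_sub, inner_sub_left]
    push_cast
    rw [mul_mul_mul_comm, ← Complex.exp_add]
    ring_nf
  simp_rw [this]
  rw [integral_const_mul]
  have := threeDim (l - k)
  rw [show (∫ y in Q, Complex.exp (Complex.I * (⟪kv (l-k), y⟫ : ℝ))) =
    (∫ y, Complex.exp (Complex.I * (⟪kv (l-k), y⟫ : ℝ)) ∂μQ) from rfl] at this
  rw [this]
  rcases eq_or_ne k l with rfl | hkl
  · simp only [sub_self, eq_self_iff_true, if_true]
    norm_cast
    rw [bC_sq]
  · rw [if_neg (by simpa [sub_eq_zero] using (Ne.symm hkl)), if_neg hkl, mul_zero]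

lemma abs_coord_le_norm (y : E3) (i : Fin 3) : |y i| ≤ ‖y‖ := by
  rw [EuclideanSpace.norm_eq]
  have h1 : |y i| = Real.sqrt (‖y i‖ ^ 2) := by
    rw [Real.norm_eq_abs, sq_abs, Real.sqrt_sq_eq_abs]
  rw [h1]
  apply Real.sqrt_le_sqrt
  exact Finset.single_le_sum (fun j _ => sq_nonneg (‖y j‖)) (Finset.mem_univ i)

section main
variable (c : ℝ) (L : ℕ) (x : E3)

def SB (a : ℝ) : Set E3 := Metric.closedBall 0 a

def zeta : E3 → ℂ :=
  (SB (c / L)).indicator (fun y => ((L : ℂ)) ^ 3 *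
    Complex.exp (Complex.I * (((L : ℝ) * ⟪x, y⟫ : ℝ) : ℂ)))

lemma zeta_memℒp : MemLp (zeta c L x) 2 μQ := by
  refine MemLp.mono_exponent (q := ⊤) ?_ le_top
  apply memLp_top_of_bound ?_ ((L:ℝ)^3)
  · filter_upwards with y
    rw [zeta]
    by_cases hy : y ∈ SB (c / L)
    · rw [Set.indicator_of_mem hy]
      rw [norm_mul]
      simp [Complex.norm_exp]
    · rw [Set.indicator_of_notMem hy]
      simp only [norm_zero]
      positivity
  · apply AEStronglyMeasurable.indicator
    · apply Continuous.aestronglyMeasurable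
      apply continuous_const.mul
      apply Complex.continuous_exp.comp
      apply continuous_const.mul
      exact Complex.continuous_ofReal.comp
        (continuous_const.mul (continuous_const.inner continuous_id))
    · exact measurableSet_closedBall

def Zlp : Lp ℂ 2 μQ := (zeta_memℒp c L x).toLp (zeta c L x)

-- volume of the closed ball of radius a
lemma vol_ball (a : ℝ) (ha : 0 ≤ a) :
    (volume (SB a)).toReal = 4 * π / 3 * a ^ 3 := by
  rw [SB, EuclideanSpace.volume_closedBall]
  have hcard : (Fintype.card (Fin 3) : ℝ) = 3 := by simp
  rw [Fintype.card_fin]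
  have hG : Real.Gamma ((3:ℝ) / 2 + 1) = 3 / 4 * Real.sqrt π := by
    rw [Real.Gamma_add_one (by norm_num)]
    have : (3:ℝ)/2 = 1/2 + 1 := by norm_num
    rw [this, Real.Gamma_add_one (by norm_num), Real.Gamma_one_half_eq]
    ring
  have hconst : Real.sqrt π ^ 3 / Real.Gamma ((3:ℝ)/2 + 1) = 4 * π / 3 := by
    rw [hG]
    have hs : Real.sqrt π ^ 3 = π * Real.sqrt π := by
      rw [pow_succ, show Real.sqrt π ^ 2 = π from Real.sq_sqrt pi_pos.le]
    rw [hs]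
    have : Real.sqrt π ≠ 0 := ne_of_gt (Real.sqrt_pos.2 pi_pos)
    field_simp
  simp only [Nat.cast_ofNat]
  rw [ENNReal.toReal_mul, ENNReal.toReal_pow, ENNReal.toReal_ofReal ha,
    ENNReal.toReal_ofReal (by rw [hconst]; positivity)]
  rw [hconst]
  ring
end main

lemma SB_meas (a : ℝ) : MeasurableSet (SB a) := measurableSet_closedBall

section main2
variable {c : ℝ} {L : ℕ} (x : E3)

lemma SB_subset_Q (hL : 0 < L) (hcL : c ≤ π * L) : SB (c / L) ⊆ Q := by
  intro y hy i
  have h1 : ‖y‖ ≤ c / L := by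
    simpa [SB, Metric.mem_closedBall, dist_zero_right] using hy
  have h2 : c / L ≤ π := by
    rw [div_le_iff₀ (by exact_mod_cast hL)]
    linarith [hcL]
  have := (abs_coord_le_norm y i).trans (h1.trans h2)
  exact abs_le.1 this

lemma muQ_SB (hc : 0 ≤ c) (hL : 0 < L) (hcL : c ≤ π * L) :
    (μQ (SB (c / L))).toReal = 4 * π / 3 * (c / L) ^ 3 := by
  rw [Measure.restrict_apply (SB_meas _)]
  rw [Set.inter_eq_self_of_subset_left (SB_subset_Q hL hcL)]
  exact vol_ball _ (by positivity)

lemma norm_Zlp_sq (hc : 0 ≤ c) (hL : 0 < L) (hcL : c ≤ π * L) : ‖Zlp c L x‖ ^ 2 = 4 * π / 3 * c ^ 3 * (L : ℝ) ^ 3 := by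
  have h := inner_self_eq_norm_sq (𝕜 := ℂ) (Zlp c L x)
  rw [← h, Zlp, inner_toLp]
  have hpt : ∀ y : E3, (starRingEnd ℂ) (zeta c L x y) * zeta c L x y =
      (SB (c / L)).indicator (fun _ => (((L:ℝ) ^ 6 : ℝ) : ℂ)) y := by
    intro y
    rw [zeta]
    by_cases hy : y ∈ SB (c / L)
    · rw [Set.indicator_of_mem hy, Set.indicator_of_mem hy]
      rw [map_mul, ← Complex.exp_conj, map_mul, Complex.conj_I, Complex.conj_ofReal]
      rw [mul_mul_mul_comm, ← Complex.exp_add]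
      have : -Complex.I * ((((L:ℝ) * ⟪x, y⟫ : ℝ)) : ℂ) + Complex.I * ((((L:ℝ) * ⟪x, y⟫ : ℝ)) : ℂ) = 0 := by ring
      rw [this, Complex.exp_zero, mul_one]
      have h3 : (starRingEnd ℂ) ((L:ℂ)^3) = (L:ℂ)^3 := by simp
      rw [h3, ← pow_add]
      norm_cast
    · rw [Set.indicator_of_notMem hy, Set.indicator_of_notMem hy, mul_zero]
  simp_rw [hpt]
  rw [integral_indicator_const (((((L:ℝ)) ^ 6 : ℝ) : ℂ)) (SB_meas _)]
  rw [measureReal_def, muQ_SB hc hL hcL]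
  rw [Complex.real_smul, ← Complex.ofReal_mul]
  rw [show ∀ r : ℝ, RCLike.re (r : ℂ) = r from fun r => by simp]
  have hLne : (L:ℝ) ≠ 0 := by exact_mod_cast hL.ne'
  field_simp

lemma finrank_E3 : Module.finrank ℝ E3 = 3 := by
  simp [finrank_euclideanSpace]

lemma scale_integral (w : E3) {a : ℝ} (ha : 0 < a) :
    (∫ y in SB a, Complex.exp (Complex.I * ((⟪w, y⟫ : ℝ) : ℂ))) =
      (a ^ 3 : ℝ) • ∫ u in ballR, Complex.exp (Complex.I * ((a * ⟪w, u⟫ : ℝ) : ℂ)) := by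
  set f : E3 → ℂ := (SB a).indicator (fun y => Complex.exp (Complex.I * ((⟪w, y⟫ : ℝ) : ℂ))) with hf
  have key := Measure.integral_comp_smul_of_nonneg (volume : Measure E3) f a (hR := ha.le)
  have hfs : ∀ u : E3, f (a • u) =
      ballR.indicator (fun u => Complex.exp (Complex.I * ((a * ⟪w, u⟫ : ℝ) : ℂ))) u := by
    intro u
    have hmem : a • u ∈ SB a ↔ u ∈ ballR := by
      simp only [SB, ballR, Metric.mem_closedBall, dist_zero_right, norm_smul,
        Real.norm_eq_abs, abs_of_pos ha]
      constructor
      · intro h; nlinarith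
      · intro h; nlinarith
    by_cases hu : u ∈ ballR
    · rw [Set.indicator_of_mem hu, hf, Set.indicator_of_mem (hmem.2 hu)]
      rw [real_inner_smul_right]
    · rw [Set.indicator_of_notMem hu, hf, Set.indicator_of_notMem (fun h => hu (hmem.1 h))]
  simp_rw [hfs] at key
  rw [integral_indicator (by exact measurableSet_closedBall : MeasurableSet ballR)] at key
  rw [hf, integral_indicator (by exact measurableSet_closedBall : MeasurableSet (SB a))] at key
  rw [key, finrank_E3, smul_smul]
  rw [mul_inv_cancel₀ (by positivity : (a:ℝ)^3 ≠ 0), one_smul]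

lemma inner_eK_Zlp (hc : 0 < c) (hL : 0 < L) (hcL : c ≤ π * L) (k : Fin 3 → ℤ) :
    (inner ℂ (eK k) (Zlp c L x) : ℂ) =
      ((bC * (2 * π) ^ 3 : ℝ) : ℂ) * besinc c (x - (L : ℝ)⁻¹ • kv k) := by
  have hLR : (0:ℝ) < L := by exact_mod_cast hL
  have ha : (0:ℝ) < c / L := by positivity
  rw [eK, Zlp, inner_toLp]
  set w : E3 := (L : ℝ) • x - kv k with hw
  have hpt : ∀ y : E3, (starRingEnd ℂ) (fK k y) * zeta c L x y =
      (SB (c / L)).indicator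
        (fun y => ((bC : ℂ) * (L : ℂ) ^ 3) * Complex.exp (Complex.I * ((⟪w, y⟫ : ℝ) : ℂ))) y := by
    intro y
    rw [zeta]
    by_cases hy : y ∈ SB (c / L)
    · rw [Set.indicator_of_mem hy, Set.indicator_of_mem hy]
      rw [fK, map_mul, ← Complex.exp_conj, map_mul, Complex.conj_I, Complex.conj_ofReal,
        Complex.conj_ofReal]
      have harg : (⟪w, y⟫ : ℝ) = (L : ℝ) * ⟪x, y⟫ - ⟪kv k, y⟫ := by
        rw [hw, inner_sub_left, real_inner_smul_left]
      rw [harg]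
      rw [mul_mul_mul_comm, ← Complex.exp_add]
      push_cast
      ring_nf
    · rw [Set.indicator_of_notMem hy, Set.indicator_of_notMem hy, mul_zero]
  simp_rw [hpt]
  rw [integral_indicator (SB_meas _)]
  rw [Measure.restrict_restrict (SB_meas _),
    Set.inter_eq_self_of_subset_left (SB_subset_Q hL hcL)]
  rw [MeasureTheory.integral_const_mul]
  rw [scale_integral w ha]
  have hintgr : (∫ u in ballR, Complex.exp (Complex.I * ((c / L * ⟪w, u⟫ : ℝ) : ℂ)))
      = ∫ u in ballR, Complex.exp (Complex.I * ((c * ⟪x - (L:ℝ)⁻¹ • kv k, u⟫ : ℝ) : ℂ)) := by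
    apply integral_congr_ae
    filter_upwards with u
    have hL0 : (L:ℝ) ≠ 0 := ne_of_gt hLR
    have harg : c / L * ⟪w, u⟫ = c * ⟪x - (L:ℝ)⁻¹ • kv k, u⟫ := by
      rw [hw, inner_sub_left, inner_sub_left, real_inner_smul_left, real_inner_smul_left]
      field_simp
    rw [harg]
  have hL0 : (L:ℝ) ≠ 0 := ne_of_gt hLR
  have hpi0 : (2*π:ℝ) ≠ 0 := by positivity
  have hr : bC * (L:ℝ)^3 * (c/L)^3 = bC * (2*π)^3 * (c/(2*π))^3 := by
    field_simp
  have hcst : (bC:ℂ) * (L:ℂ)^3 * (((c/(L:ℝ))^3 : ℝ) : ℂ)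
      = ((bC * (2*π)^3 : ℝ) : ℂ) * ((c:ℂ) / (2*(π:ℂ)))^3 := by
    have := congrArg (fun r : ℝ => (r : ℂ)) hr
    push_cast at this ⊢
    linear_combination this
  rw [hintgr, besinc, Complex.real_smul, ← mul_assoc, ← mul_assoc, hcst]

end main2


/-- For `c ≤ πL`: `Σ_{k/L∉R} |h_c(x − k/L)|² ≤ (4π/3) c³ L³` for every `x`. -/
theorem sum_sq_besinc_shift_le (c : ℝ) (hc : 0 < c) (L : ℕ) (hL : 0 < L)
    (hcL : c ≤ π * L) (x : E3) :
    xiSq c L x ≤ 4 * π / 3 * c ^ 3 * (L : ℝ) ^ 3 := by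
  rw [xiSq]
  set v : {k : Fin 3 → ℤ // (L : ℝ)⁻¹ • kv k ∉ ballR} → Lp ℂ 2 μQ :=
    fun k => eK k.1 with hv_def
  have hv : Orthonormal ℂ v := eK_orthonormal.comp _ Subtype.val_injective
  have hbessel := hv.tsum_inner_products_le (Zlp c L x)
  have hsum := hv.inner_products_summable (Zlp c L x)
  have hpt : ∀ k : {k : Fin 3 → ℤ // (L : ℝ)⁻¹ • kv k ∉ ballR},
      ‖besinc c (x - (L : ℝ)⁻¹ • kv k.1)‖ ^ 2 ≤
        ‖(inner ℂ (v k) (Zlp c L x) : ℂ)‖ ^ 2 := by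
    intro k
    rw [hv_def]
    rw [inner_eK_Zlp x hc hL hcL k.1]
    rw [norm_mul, Complex.norm_real, mul_pow]
    have h1 : ‖besinc c (x - (L:ℝ)⁻¹ • kv k.1)‖ ^ 2 =
        ‖besinc c (x - (L:ℝ)⁻¹ • kv k.1)‖ ^ 2 := by
      rfl
    rw [h1]
    have hfac : (1:ℝ) ≤ ‖(bC * (2 * π) ^ 3 : ℝ)‖ ^ 2 := by
      rw [Real.norm_eq_abs, sq_abs]
      have : (bC * (2*π)^3)^2 = (bC^2 * (2*π)^3) * (2*π)^3 := by ring
      rw [this, bC_sq, one_mul]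
      nlinarith [pi_gt_three, sq_nonneg π]
    nlinarith [sq_nonneg (‖besinc c (x - (L:ℝ)⁻¹ • kv k.1)‖)]
  have hsumL : Summable (fun k : {k : Fin 3 → ℤ // (L : ℝ)⁻¹ • kv k ∉ ballR} =>
      ‖besinc c (x - (L : ℝ)⁻¹ • kv k.1)‖ ^ 2) :=
    Summable.of_nonneg_of_le (fun k => sq_nonneg _) hpt hsum
  calc ∑' k : {k : Fin 3 → ℤ // (L : ℝ)⁻¹ • kv k ∉ ballR},
      ‖besinc c (x - (L : ℝ)⁻¹ • kv k.1)‖ ^ 2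
      ≤ ∑' k, ‖(inner ℂ (v k) (Zlp c L x) : ℂ)‖ ^ 2 := Summable.tsum_le_tsum hpt hsumL hsum
    _ ≤ ‖Zlp c L x‖ ^ 2 := hbessel
    _ = 4 * π / 3 * c ^ 3 * (L : ℝ) ^ 3 := norm_Zlp_sq x hc.le hL hcL
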